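/- Assume f is continuous ((f0)) and satisfies (f1) and (f2). Let (u_n) and (v_n) be sequences of measurable functions from ℝ^N to ℝ such that sup_n ∫_{ℝ^N} |u_n|^{p^*} dx < +∞, sup_n ∫_{ℝ^N} |u_n|^{p_*} dx < +∞, sup_n ∫_{ℝ^N} |v_n|^{p^*} dx < +∞, and ∫_{ℝ^N} |v_n|^{p_*} dx → 0 as n → ∞. Then ∫_{ℝ^N} f(u_n)·v_n dx → 0 as n → ∞. (Lemma 2.1(iii), stated with the Lebesgue-norm bounds that the Sobolev bounds yield.) -/

import Mathlib

open Filter Set MeasureTheory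
open scoped ENNReal NNReal

/-- If `|g|^r` is integrable and `r > 0`, then `g ∈ L^r`. -/
lemma aux_memLp {α : Type*} [MeasurableSpace α] {μ : Measure α} {g : α → ℝ}
    (hg : AEStronglyMeasurable g μ) {r : ℝ} (hr : 0 < r)
    (h : Integrable (fun x => |g x| ^ r) μ) : MemLp g (ENNReal.ofReal r) μ := by
  have hq0 : ENNReal.ofReal r ≠ 0 := by
    simp [ENNReal.ofReal_eq_zero, not_le, hr]
  have hqt : ENNReal.ofReal r ≠ ⊤ := ENNReal.ofReal_ne_top
  refine (memLp_norm_rpow_iff (p := ENNReal.ofReal r) hg hq0 hqt).mp ?_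
  rw [ENNReal.div_self hq0 hqt, memLp_one_iff_integrable]
  simpa [Real.norm_eq_abs, ENNReal.toReal_ofReal hr.le] using h

/-- Hölder inequality in the form we need. -/
lemma aux_holder {α : Type*} [MeasurableSpace α] {μ : Measure α}
    {g h : α → ℝ} (hg : Measurable g) (hh : Measurable h) {r : ℝ} (hr : 1 < r)
    (hgint : Integrable (fun x => |g x| ^ r) μ) (hhint : Integrable (fun x => |h x| ^ r) μ) :
    Integrable (fun x => |g x| ^ (r - 1) * |h x|) μ ∧
      ∫ x, |g x| ^ (r - 1) * |h x| ∂μ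
        ≤ (∫ x, |g x| ^ r ∂μ) ^ ((r - 1) / r) * (∫ x, |h x| ^ r ∂μ) ^ (1 / r) := by
  have hr1 : (0:ℝ) < r - 1 := by linarith
  have hr0 : (0:ℝ) < r := by linarith
  set q : ℝ := r / (r - 1) with hqdef
  have hconj : q.HolderConjugate r := (Real.HolderConjugate.conjExponent hr).symm
  have hmul : (r - 1) * q = r := by
    rw [hqdef]; field_simp
  have hGcont : Continuous (fun y : ℝ => |y| ^ (r - 1)) :=
    continuous_abs.rpow_const (fun x => Or.inr hr1.le)
  have hGmeas : AEStronglyMeasurable (fun x => |g x| ^ (r - 1)) μ :=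
    (hGcont.measurable.comp hg).aestronglyMeasurable
  have hGeq : (fun x => |(|g x| ^ (r - 1))| ^ q) = fun x => |g x| ^ r := by
    funext x
    rw [abs_of_nonneg (Real.rpow_nonneg (abs_nonneg _) _), ← Real.rpow_mul (abs_nonneg _), hmul]
  have hG : MemLp (fun x => |g x| ^ (r - 1)) (ENNReal.ofReal q) μ := by
    refine aux_memLp hGmeas hconj.pos ?_
    rw [hGeq]; exact hgint
  have hH : MemLp h (ENNReal.ofReal r) μ :=
    aux_memLp hh.aestronglyMeasurable hr0 hhint
  have hsum : (1 : ℝ≥0∞) / 1 = 1 / ENNReal.ofReal q + 1 / ENNReal.ofReal r := by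
    simp only [one_div, inv_one]
    exact hconj.inv_add_inv_ennreal.symm
  have hintprod : Integrable (fun x => |g x| ^ (r - 1) * h x) μ := by
    haveI : ENNReal.HolderTriple (ENNReal.ofReal q) (ENNReal.ofReal r) 1 :=
      ⟨by simpa [one_div] using hsum.symm⟩
    have := memLp_one_iff_integrable.mp (hH.smul hG (r := 1))
    simpa [smul_eq_mul, Pi.mul_def] using this
  have hint : Integrable (fun x => |g x| ^ (r - 1) * |h x|) μ := by
    have := hintprod.abs
    have heq : (fun x => |(|g x| ^ (r - 1) * h x)|) = fun x => |g x| ^ (r - 1) * |h x| := by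
      funext x
      rw [abs_mul, abs_of_nonneg (Real.rpow_nonneg (abs_nonneg _) _)]
    rwa [heq] at this
  refine ⟨hint, ?_⟩
  have hineq := integral_mul_le_Lp_mul_Lq_of_nonneg (μ := μ) hconj
      (f := fun x => |g x| ^ (r - 1)) (g := fun x => |h x|)
      (Eventually.of_forall fun x => Real.rpow_nonneg (abs_nonneg _) _)
      (Eventually.of_forall fun x => abs_nonneg _)
      hG (by simpa [Real.norm_eq_abs] using hH.norm)
  beta_reduce at hineq
  have h1 : (∫ x, (|g x| ^ (r - 1)) ^ q ∂μ) = ∫ x, |g x| ^ r ∂μ := by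
    refine integral_congr_ae (Eventually.of_forall fun x => ?_)
    show (|g x| ^ (r - 1)) ^ q = |g x| ^ r
    rw [← Real.rpow_mul (abs_nonneg _), hmul]
  have h2 : 1 / q = (r - 1) / r := by
    rw [hqdef, one_div_div]
  rwa [h1, h2] at hineq

/-- The growth bound coming from (f1), (f2) and continuity. -/
lemma aux_fbound (f : ℝ → ℝ) (hf0 : Continuous f) {A B : ℝ} (hA : 0 < A) (hB : 0 < B)
    (hf1 : Tendsto (fun t : ℝ => f t / |t| ^ A) (nhdsWithin 0 {0}ᶜ) (nhds 0))
    (hf2 : Tendsto (fun t : ℝ => f t / |t| ^ B) (cocompact ℝ) (nhds 0))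
    {ε : ℝ} (hε : 0 < ε) :
    ∃ K, 0 ≤ K ∧ ∀ t : ℝ, |f t| ≤ ε * |t| ^ B + K * |t| ^ A := by
  -- `f 0 = 0`
  have habs : Tendsto (fun t : ℝ => |t| ^ A) (nhds (0:ℝ)) (nhds 0) := by
    have h1 : ContinuousAt (fun x : ℝ => x ^ A) (|0| : ℝ) :=
      Real.continuousAt_rpow_const _ _ (Or.inr hA.le)
    have := h1.tendsto.comp (continuous_abs.tendsto (0:ℝ))
    simpa [Real.zero_rpow hA.ne', Function.comp_def] using this
  have hf00 : f 0 = 0 := by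
    have h2 : Tendsto f (nhdsWithin 0 {0}ᶜ) (nhds 0) := by
      have h3 := hf1.mul (habs.mono_left nhdsWithin_le_nhds)
      rw [zero_mul] at h3
      refine h3.congr' ?_
      filter_upwards [self_mem_nhdsWithin] with t ht
      have ht0 : t ≠ 0 := ht
      have : |t| ^ A ≠ 0 := (Real.rpow_pos_of_pos (abs_pos.mpr ht0) A).ne'
      field_simp
    have h4 : Tendsto f (nhdsWithin 0 {0}ᶜ) (nhds (f 0)) :=
      (hf0.tendsto 0).mono_left nhdsWithin_le_nhds
    exact tendsto_nhds_unique h4 h2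
  -- small |t|
  rw [Metric.tendsto_nhdsWithin_nhds] at hf1
  obtain ⟨δ, hδ, hsmall⟩ := hf1 ε hε
  -- large |t|
  have hball := hf2 (Metric.ball_mem_nhds (0:ℝ) hε)
  rw [mem_map, mem_cocompact] at hball
  obtain ⟨s, hs, hsub⟩ := hball
  obtain ⟨ρ, hρ⟩ := hs.isBounded.subset_closedBall 0
  set M : ℝ := max ρ 1 with hMdef
  have hM1 : (1:ℝ) ≤ M := le_max_right _ _
  have hM0 : (0:ℝ) < M := lt_of_lt_of_le one_pos hM1
  -- bound on the middle compact region
  obtain ⟨Bd, hBd⟩ := (isCompact_Icc (a := -M) (b := M)).exists_bound_of_continuousOn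
    hf0.continuousOn
  have hBd0 : 0 ≤ Bd := le_trans (norm_nonneg (f 0)) (hBd 0 ⟨by linarith, by linarith⟩)
  have hδA : (0:ℝ) < δ ^ A := Real.rpow_pos_of_pos hδ A
  refine ⟨ε + Bd / δ ^ A, by positivity, fun t => ?_⟩
  rcases eq_or_ne t 0 with rfl | ht0
  · simp [hf00, Real.zero_rpow hA.ne', Real.zero_rpow hB.ne']
  · have htpos : 0 < |t| := abs_pos.mpr ht0
    have hApos : 0 < |t| ^ A := Real.rpow_pos_of_pos htpos A
    have hBpos2 : 0 ≤ |t| ^ B := Real.rpow_nonneg (abs_nonneg t) B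
    by_cases hlt : |t| < δ
    · have hd := hsmall (x := t) ht0 (by simpa [Real.dist_eq] using hlt)
      rw [Real.dist_eq, sub_zero, abs_div, abs_of_nonneg hApos.le, div_lt_iff₀ hApos] at hd
      have hKA : ε * |t| ^ A ≤ (ε + Bd / δ ^ A) * |t| ^ A := by
        apply mul_le_mul_of_nonneg_right _ hApos.le
        have : 0 ≤ Bd / δ ^ A := by positivity
        linarith
      nlinarith [mul_nonneg hε.le hBpos2]
    · push_neg at hlt
      by_cases hM : |t| ≤ M
      · have ht' : t ∈ Icc (-M) M := by
          constructor <;> [linarith [neg_abs_le t]; linarith [le_abs_self t]]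
        have h6 : |f t| ≤ Bd := by simpa [Real.norm_eq_abs] using hBd t ht'
        have h7 : δ ^ A ≤ |t| ^ A := Real.rpow_le_rpow hδ.le hlt hA.le
        have h8 : Bd / δ ^ A * δ ^ A ≤ Bd / δ ^ A * |t| ^ A :=
          mul_le_mul_of_nonneg_left h7 (by positivity)
        rw [div_mul_cancel₀ _ hδA.ne'] at h8
        nlinarith [mul_nonneg hε.le hBpos2, mul_nonneg hε.le hApos.le]
      · push_neg at hM
        have hts : t ∉ s := by
          intro hts
          have := hρ hts
          rw [Metric.mem_closedBall, Real.dist_eq, sub_zero] at this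
          have : |t| ≤ M := le_trans this (le_max_left _ _)
          linarith
        have hd := hsub hts
        rw [mem_preimage, Metric.mem_ball, Real.dist_eq, sub_zero] at hd
        have hBpos : 0 < |t| ^ B := Real.rpow_pos_of_pos htpos B
        rw [abs_div, abs_of_nonneg hBpos.le, div_lt_iff₀ hBpos] at hd
        have : 0 ≤ (ε + Bd / δ ^ A) * |t| ^ A := by positivity
        linarith

theorem stmt_14 (N : ℕ) (hN : 3 ≤ N) (p : ℝ) (hp2 : 2 ≤ p) (hpN : p < (N : ℝ))
    (f : ℝ → ℝ) (hf0 : Continuous f)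
    (hf1 : Tendsto (fun t : ℝ => f t / |t| ^ (p + 2 * p / (N : ℝ) - 1)) (nhdsWithin 0 {0}ᶜ) (nhds 0))
    (hf2 : Tendsto (fun t : ℝ => f t / |t| ^ ((N : ℝ) * p / ((N : ℝ) - p) - 1)) (cocompact ℝ) (nhds 0))
    (u v : ℕ → (Fin N → ℝ) → ℝ)
    (humeas : ∀ n : ℕ, Measurable (u n)) (hvmeas : ∀ n : ℕ, Measurable (v n))
    (hintu1 : ∀ n : ℕ, Integrable (fun x : Fin N → ℝ => |u n x| ^ ((N : ℝ) * p / ((N : ℝ) - p))))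
    (hintu2 : ∀ n : ℕ, Integrable (fun x : Fin N → ℝ => |u n x| ^ (p + 2 * p / (N : ℝ))))
    (hintv1 : ∀ n : ℕ, Integrable (fun x : Fin N → ℝ => |v n x| ^ ((N : ℝ) * p / ((N : ℝ) - p))))
    (hintv2 : ∀ n : ℕ, Integrable (fun x : Fin N → ℝ => |v n x| ^ (p + 2 * p / (N : ℝ))))
    (C : ℝ)
    (hCu1 : ∀ n : ℕ, (∫ x : Fin N → ℝ, |u n x| ^ ((N : ℝ) * p / ((N : ℝ) - p))) ≤ C)
    (hCu2 : ∀ n : ℕ, (∫ x : Fin N → ℝ, |u n x| ^ (p + 2 * p / (N : ℝ))) ≤ C)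
    (hCv1 : ∀ n : ℕ, (∫ x : Fin N → ℝ, |v n x| ^ ((N : ℝ) * p / ((N : ℝ) - p))) ≤ C)
    (hto0 : Tendsto (fun n : ℕ => ∫ x : Fin N → ℝ, |v n x| ^ (p + 2 * p / (N : ℝ))) atTop (nhds 0)) :
    Tendsto (fun n : ℕ => ∫ x : Fin N → ℝ, f (u n x) * v n x) atTop (nhds 0) := by
  have hN3 : (3:ℝ) ≤ (N:ℝ) := by exact_mod_cast hN
  have hNpos : (0:ℝ) < (N:ℝ) := by linarith
  set a : ℝ := p + 2 * p / (N : ℝ) with hadef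
  set b : ℝ := (N : ℝ) * p / ((N : ℝ) - p) with hbdef
  have ha1 : 1 < a := by
    have h1 : 0 < 2 * p / (N:ℝ) := by positivity
    rw [hadef]; linarith
  have hNp : (0:ℝ) < (N:ℝ) - p := by linarith
  have hb1 : 1 < b := by
    rw [hbdef, lt_div_iff₀ hNp]; nlinarith
  -- a convenient positive constant
  set C' : ℝ := max C 1 with hC'def
  have hC'pos : (0:ℝ) < C' := lt_of_lt_of_le one_pos (le_max_right _ _)
  have hCu1' : ∀ n, (∫ x : Fin N → ℝ, |u n x| ^ b) ≤ C' := fun n =>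
    le_trans (hCu1 n) (le_max_left _ _)
  have hCu2' : ∀ n, (∫ x : Fin N → ℝ, |u n x| ^ a) ≤ C' := fun n =>
    le_trans (hCu2 n) (le_max_left _ _)
  have hCv1' : ∀ n, (∫ x : Fin N → ℝ, |v n x| ^ b) ≤ C' := fun n =>
    le_trans (hCv1 n) (le_max_left _ _)
  -- Hölder for the two exponents
  have Hb := fun n => aux_holder (humeas n) (hvmeas n) hb1 (hintu1 n) (hintv1 n)
  have Ha := fun n => aux_holder (humeas n) (hvmeas n) ha1 (hintu2 n) (hintv2 n)
  -- bounds for the critical term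
  have hJb : ∀ n, (∫ x : Fin N → ℝ, |u n x| ^ (b - 1) * |v n x|) ≤ C' := by
    intro n
    refine le_trans (Hb n).2 ?_
    have h1 : (∫ x : Fin N → ℝ, |u n x| ^ b) ^ ((b - 1) / b) ≤ C' ^ ((b - 1) / b) :=
      Real.rpow_le_rpow (integral_nonneg fun x => Real.rpow_nonneg (abs_nonneg _) _)
        (hCu1' n) (div_nonneg (by linarith) (by linarith))
    have h2 : (∫ x : Fin N → ℝ, |v n x| ^ b) ^ (1 / b) ≤ C' ^ (1 / b) :=
      Real.rpow_le_rpow (integral_nonneg fun x => Real.rpow_nonneg (abs_nonneg _) _)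
        (hCv1' n) (div_nonneg (by linarith) (by linarith))
    have h3 : C' ^ ((b - 1) / b) * C' ^ (1 / b) = C' := by
      rw [← Real.rpow_add hC'pos]
      have : (b - 1) / b + 1 / b = 1 := by field_simp; ring
      rw [this, Real.rpow_one]
    calc (∫ x : Fin N → ℝ, |u n x| ^ b) ^ ((b - 1) / b)
          * (∫ x : Fin N → ℝ, |v n x| ^ b) ^ (1 / b)
        ≤ C' ^ ((b - 1) / b) * C' ^ (1 / b) := by
          apply mul_le_mul h1 h2 (Real.rpow_nonneg
            (integral_nonneg fun x => Real.rpow_nonneg (abs_nonneg _) _) _) (by positivity)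
      _ = C' := h3
  -- bound for the subcritical term
  set t : ℕ → ℝ := fun n => (∫ x : Fin N → ℝ, |v n x| ^ a) ^ (1 / a) with htdef
  have htnonneg : ∀ n, 0 ≤ t n := fun n =>
    Real.rpow_nonneg (integral_nonneg fun x => Real.rpow_nonneg (abs_nonneg _) _) _
  have hJa : ∀ n, (∫ x : Fin N → ℝ, |u n x| ^ (a - 1) * |v n x|)
      ≤ C' ^ ((a - 1) / a) * t n := by
    intro n
    refine le_trans (Ha n).2 ?_
    apply mul_le_mul_of_nonneg_right _ (htnonneg n)
    exact Real.rpow_le_rpow (integral_nonneg fun x => Real.rpow_nonneg (abs_nonneg _) _)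
      (hCu2' n) (div_nonneg (by linarith) (by linarith))
  have ht0 : Tendsto t atTop (nhds 0) := by
    have ha0 : (0:ℝ) < a := by linarith
    have := hto0.rpow_const (p := 1 / a) (Or.inr (div_nonneg zero_le_one ha0.le))
    rwa [Real.zero_rpow (one_div_ne_zero ha0.ne')] at this
  -- conclusion
  rw [NormedAddCommGroup.tendsto_nhds_zero]
  intro ε hε
  obtain ⟨K, hK0, hKb⟩ := aux_fbound f hf0 (by linarith : (0:ℝ) < a - 1)
    (by linarith : (0:ℝ) < b - 1) hf1 hf2
    (show (0:ℝ) < ε / (2 * C') from div_pos hε (by linarith))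
  set ε' : ℝ := ε / (2 * C') with hε'def
  have hε'pos : 0 < ε' := div_pos hε (by linarith)
  have hev : ∀ᶠ n in atTop, K * (C' ^ ((a - 1) / a) * t n) < ε / 2 := by
    have hlim : Tendsto (fun n => K * (C' ^ ((a - 1) / a) * t n)) atTop (nhds 0) := by
      have h := (ht0.const_mul (C' ^ ((a - 1) / a))).const_mul K
      rw [mul_zero, mul_zero] at h
      exact h
    exact hlim.eventually (gt_mem_nhds (by linarith))
  filter_upwards [hev] with n hn
  -- pointwise bound and integration
  have hint : Integrable (fun x : Fin N → ℝ =>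
      ε' * (|u n x| ^ (b - 1) * |v n x|) + K * (|u n x| ^ (a - 1) * |v n x|)) :=
    ((Hb n).1.const_mul _).add ((Ha n).1.const_mul _)
  have hkey : (∫ x : Fin N → ℝ, |f (u n x) * v n x|)
      ≤ ε' * (∫ x : Fin N → ℝ, |u n x| ^ (b - 1) * |v n x|)
        + K * (∫ x : Fin N → ℝ, |u n x| ^ (a - 1) * |v n x|) := by
    have hmono : (∫ x : Fin N → ℝ, |f (u n x) * v n x|)
        ≤ ∫ x : Fin N → ℝ,
            ε' * (|u n x| ^ (b - 1) * |v n x|) + K * (|u n x| ^ (a - 1) * |v n x|) := by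
      refine integral_mono_of_nonneg (Eventually.of_forall fun x => abs_nonneg _) hint
        (Eventually.of_forall fun x => ?_)
      show |f (u n x) * v n x| ≤ ε' * (|u n x| ^ (b - 1) * |v n x|) + K * (|u n x| ^ (a - 1) * |v n x|)
      have hb' := mul_le_mul_of_nonneg_right (hKb (u n x)) (abs_nonneg (v n x))
      rw [abs_mul]
      refine hb'.trans (le_of_eq ?_)
      ring
    rw [integral_add ((Hb n).1.const_mul _) ((Ha n).1.const_mul _),
      integral_const_mul, integral_const_mul] at hmono
    exact hmono
  have hnorm : ‖∫ x : Fin N → ℝ, f (u n x) * v n x‖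
      ≤ ∫ x : Fin N → ℝ, |f (u n x) * v n x| := by
    simpa only [Real.norm_eq_abs] using
      norm_integral_le_integral_norm (μ := volume) (fun x : Fin N → ℝ => f (u n x) * v n x)
  have hterm1 : ε' * (∫ x : Fin N → ℝ, |u n x| ^ (b - 1) * |v n x|) ≤ ε / 2 := by
    have := mul_le_mul_of_nonneg_left (hJb n) hε'pos.le
    have heq : ε' * C' = ε / 2 := by
      rw [hε'def]; field_simp
    linarith
  have hterm2 : K * (∫ x : Fin N → ℝ, |u n x| ^ (a - 1) * |v n x|) < ε / 2 := by
    have := mul_le_mul_of_nonneg_left (hJa n) hK0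
    linarith
  calc ‖∫ x : Fin N → ℝ, f (u n x) * v n x‖
      ≤ ∫ x : Fin N → ℝ, |f (u n x) * v n x| := hnorm
    _ ≤ ε' * (∫ x : Fin N → ℝ, |u n x| ^ (b - 1) * |v n x|)
        + K * (∫ x : Fin N → ℝ, |u n x| ^ (a - 1) * |v n x|) := hkey
    _ < ε / 2 + ε / 2 := by
        apply add_lt_add_of_le_of_lt hterm1 hterm2
    _ = ε := by ring
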